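/- arXiv:2111.10448 — 3 statements merged into one kernel-verified Lean document; each statement's English description precedes it below -/
import Mathlib

section
/- Let X ∈ ℂ^{n₁×n₂×n₃} be a tensor with unfoldings X₁ and X₂, and let 0 < ε < 1. Suppose U₁ ∈ ℂ^{n₁×r₁} and U₂ ∈ ℂ^{(n₁n₂)×r₂} have orthonormal columns with ‖X₁ − U₁U₁*X₁‖_F ≤ (ε/√2)‖X‖_F and ‖X₂ − U₂U₂*X₂‖_F ≤ (ε/√2)‖X‖_F. Define the tensor X̃ entrywise by X̃_{i₁,i₂,i₃} = U₁(i₁,:) · U₁* U₂((i₂−1)n₁+1 : i₂n₁, :) · U₂* X₂(:, i₃). Then ‖X − X̃‖_F ≤ ε‖X‖_F. -/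
open Matrix

/-- Frobenius norm of a complex matrix. -/
noncomputable def frob {m n : Type*} [Fintype m] [Fintype n] (A : Matrix m n ℂ) : ℝ :=
  Real.sqrt (∑ i, ∑ j, ‖A i j‖ ^ 2)

/-- Frobenius norm of a 3-tensor. -/
noncomputable def frobT {n₁ n₂ n₃ : ℕ} (X : Fin n₁ → Fin n₂ → Fin n₃ → ℂ) : ℝ :=
  Real.sqrt (∑ i, ∑ j, ∑ k, ‖X i j k‖ ^ 2)

noncomputable def S {m n : Type*} [Fintype m] [Fintype n] (A : Matrix m n ℂ) : ℝ :=
  ∑ i, ∑ j, ‖A i j‖ ^ 2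

lemma S_nonneg {m n : Type*} [Fintype m] [Fintype n] (A : Matrix m n ℂ) : 0 ≤ S A := by
  apply Finset.sum_nonneg; intros; apply Finset.sum_nonneg; intros; positivity

lemma frob_eq_sqrt_S {m n : Type*} [Fintype m] [Fintype n] (A : Matrix m n ℂ) :
    frob A = Real.sqrt (S A) := rfl

lemma S_eq_trace {m n : Type*} [Fintype m] [Fintype n] (A : Matrix m n ℂ) :
    S A = (Matrix.trace (Aᴴ * A)).re := by
  rw [S, Finset.sum_comm]
  simp only [Matrix.trace, Matrix.diag_apply, Matrix.mul_apply, Matrix.conjTranspose_apply]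
  rw [Complex.re_sum]
  refine Finset.sum_congr rfl fun j _ => ?_
  rw [Complex.re_sum]
  refine Finset.sum_congr rfl fun i _ => ?_
  simp [Complex.mul_re, Complex.sq_norm, Complex.normSq_apply]

lemma trace_cross {n m : Type*} [Fintype n] [Fintype m] (P : Matrix n n ℂ)
    (hP : Pᴴ = P) (hPP : P * P = P) (M N : Matrix n m ℂ) :
    Matrix.trace ((M - P * M)ᴴ * (P * N)) = 0 := by
  have h : (M - P * M)ᴴ * (P * N) = 0 := by
    rw [conjTranspose_sub, conjTranspose_mul, hP, Matrix.sub_mul]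
    have : Mᴴ * P * (P * N) = Mᴴ * (P * N) := by
      rw [Matrix.mul_assoc, ← Matrix.mul_assoc P P N, hPP]
    rw [this, sub_self]
  rw [h, trace_zero]

lemma S_split {n m : Type*} [Fintype n] [Fintype m] (P : Matrix n n ℂ)
    (hP : Pᴴ = P) (hPP : P * P = P) (M N : Matrix n m ℂ) :
    S ((M - P * M) + P * N) = S (M - P * M) + S (P * N) := by
  have hc : Matrix.trace ((M - P * M)ᴴ * (P * N)) = 0 := trace_cross P hP hPP M N
  have hc' : Matrix.trace ((P * N)ᴴ * (M - P * M)) = 0 := by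
    have := congrArg star hc
    rw [← Matrix.trace_conjTranspose, conjTranspose_mul, conjTranspose_conjTranspose] at this
    simpa using this
  rw [S_eq_trace, S_eq_trace, S_eq_trace, conjTranspose_add, Matrix.add_mul, Matrix.mul_add,
    Matrix.mul_add, trace_add, trace_add, trace_add, hc, hc']
  simp

lemma S_P_le {n m : Type*} [Fintype n] [Fintype m] (P : Matrix n n ℂ)
    (hP : Pᴴ = P) (hPP : P * P = P) (N : Matrix n m ℂ) :
    S (P * N) ≤ S N := by
  have h := S_split P hP hPP N N
  rw [sub_add_cancel] at h
  rw [h]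
  linarith [S_nonneg (N - P * N)]

/-- Accuracy of Parallel-TTSVD for d = 3: if U₁, U₂ have orthonormal columns and
project the unfoldings X₁, X₂ to accuracy (ε/√2)‖X‖_F, then the TT approximation
X̃_{i₁,i₂,i₃} = U₁(i₁,:) U₁ᴴ U₂((i₂-1)n₁+1:i₂n₁,:) U₂ᴴ X₂(:,i₃) satisfies
‖X − X̃‖_F ≤ ε‖X‖_F. Combined column-major indices are encoded as pairs with
the outer index first. -/
theorem stmt3 {n₁ n₂ n₃ r₁ r₂ : ℕ} (ε : ℝ) (hε : 0 < ε) (hε1 : ε < 1)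
    (X : Fin n₁ → Fin n₂ → Fin n₃ → ℂ)
    (X₁ : Matrix (Fin n₁) (Fin n₃ × Fin n₂) ℂ)
    (hX₁ : ∀ i p, X₁ i p = X i p.2 p.1)
    (X₂ : Matrix (Fin n₂ × Fin n₁) (Fin n₃) ℂ)
    (hX₂ : ∀ p k, X₂ p k = X p.2 p.1 k)
    (U₁ : Matrix (Fin n₁) (Fin r₁) ℂ) (hU₁on : U₁ᴴ * U₁ = 1)
    (U₂ : Matrix (Fin n₂ × Fin n₁) (Fin r₂) ℂ) (hU₂on : U₂ᴴ * U₂ = 1)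
    (hacc₁ : frob (X₁ - U₁ * U₁ᴴ * X₁) ≤ ε / Real.sqrt 2 * frobT X)
    (hacc₂ : frob (X₂ - U₂ * U₂ᴴ * X₂) ≤ ε / Real.sqrt 2 * frobT X)
    (Xt : Fin n₁ → Fin n₂ → Fin n₃ → ℂ)
    (hXt : ∀ i₁ i₂ i₃, Xt i₁ i₂ i₃ =
      (U₁ * U₁ᴴ * (Matrix.of fun (j : Fin n₁) (β : Fin r₂) => U₂ (i₂, j) β)
        * U₂ᴴ * X₂) i₁ i₃) :
    frobT (fun i j k => X i j k - Xt i j k) ≤ ε * frobT X := by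
  classical
  set P₁ := U₁ * U₁ᴴ with hP₁def
  have hP₁h : P₁ᴴ = P₁ := by simp [hP₁def, conjTranspose_mul]
  have hP₁P : P₁ * P₁ = P₁ := by
    rw [hP₁def, Matrix.mul_assoc, ← Matrix.mul_assoc U₁ᴴ U₁ (U₁ᴴ), hU₁on, Matrix.one_mul]
  set G : Matrix (Fin n₁) (Fin n₃ × Fin n₂) ℂ :=
    Matrix.of (fun l p => (X₂ - U₂ * U₂ᴴ * X₂) (p.2, l) p.1) with hG
  set E : Matrix (Fin n₁) (Fin n₃ × Fin n₂) ℂ :=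
    Matrix.of (fun i p => X i p.2 p.1 - Xt i p.2 p.1) with hEdef
  have hXtval : ∀ i₁ i₂ i₃, Xt i₁ i₂ i₃ = ∑ l, P₁ i₁ l * (U₂ * U₂ᴴ * X₂) (i₂, l) i₃ := by
    intro i₁ i₂ i₃
    rw [hXt]
    rw [Matrix.mul_assoc (P₁ * _), Matrix.mul_assoc P₁, Matrix.mul_apply]
    refine Finset.sum_congr rfl fun l _ => ?_
    congr 1
    rw [Matrix.mul_assoc U₂, Matrix.mul_apply, Matrix.mul_apply]
    rfl
  have hE : E = (X₁ - P₁ * X₁) + P₁ * G := by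
    ext i p
    rw [hEdef]
    simp only [Matrix.of_apply]
    rw [hXtval i p.2 p.1]
    simp only [hG, Matrix.add_apply, Matrix.sub_apply, Matrix.mul_apply, Matrix.of_apply,
      mul_sub, Finset.sum_sub_distrib, hX₁, hX₂]
    ring
  have hSG : S G = S (X₂ - U₂ * U₂ᴴ * X₂) := by
    rw [S, S]
    simp only [hG, Matrix.of_apply, Fintype.sum_prod_type]
    calc (∑ l : Fin n₁, ∑ k : Fin n₃, ∑ j : Fin n₂, ‖(X₂ - U₂ * U₂ᴴ * X₂) (j, l) k‖ ^ 2)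
        = ∑ l : Fin n₁, ∑ j : Fin n₂, ∑ k : Fin n₃, ‖(X₂ - U₂ * U₂ᴴ * X₂) (j, l) k‖ ^ 2 :=
          Finset.sum_congr rfl (fun l _ => Finset.sum_comm)
      _ = ∑ j : Fin n₂, ∑ l : Fin n₁, ∑ k : Fin n₃, ‖(X₂ - U₂ * U₂ᴴ * X₂) (j, l) k‖ ^ 2 :=
          Finset.sum_comm
  have hfrobTE : frobT (fun i j k => X i j k - Xt i j k) = Real.sqrt (S E) := by
    rw [frobT, S]
    congr 1
    refine Finset.sum_congr rfl fun i _ => ?_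
    rw [Fintype.sum_prod_type, Finset.sum_comm]
    rfl
  have hT : 0 ≤ frobT X := Real.sqrt_nonneg _
  have hb : 0 ≤ ε / Real.sqrt 2 * frobT X := by positivity
  have hsq : ∀ {m n : Type} [Fintype m] [Fintype n] (A : Matrix m n ℂ),
      frob A ≤ ε / Real.sqrt 2 * frobT X → S A ≤ (ε / Real.sqrt 2 * frobT X) ^ 2 := by
    intro m n _ _ A hA
    rw [frob_eq_sqrt_S] at hA
    calc S A = Real.sqrt (S A) ^ 2 := (Real.sq_sqrt (S_nonneg A)).symm
    _ ≤ (ε / Real.sqrt 2 * frobT X) ^ 2 := by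
        exact pow_le_pow_left₀ (Real.sqrt_nonneg _) hA 2
  have h1 : S (X₁ - P₁ * X₁) ≤ (ε / Real.sqrt 2 * frobT X) ^ 2 := hsq _ hacc₁
  have h2 : S (P₁ * G) ≤ (ε / Real.sqrt 2 * frobT X) ^ 2 := by
    refine le_trans (S_P_le P₁ hP₁h hP₁P G) ?_
    rw [hSG]
    exact hsq _ hacc₂
  have hbsq : (ε / Real.sqrt 2 * frobT X) ^ 2 = ε ^ 2 * frobT X ^ 2 / 2 := by
    rw [mul_pow, div_pow, Real.sq_sqrt (by norm_num : (0:ℝ) ≤ 2)]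
    ring
  rw [hfrobTE, hE, S_split P₁ hP₁h hP₁P X₁ G]
  calc Real.sqrt (S (X₁ - P₁ * X₁) + S (P₁ * G)) ≤ Real.sqrt (ε ^ 2 * frobT X ^ 2) := by
        apply Real.sqrt_le_sqrt
        rw [hbsq] at h1 h2
        linarith
  _ = ε * frobT X := by
        rw [← mul_pow, Real.sqrt_sq (by positivity)]
end

section
/- Let X ∈ ℂ^{n₁×n₂×n₃} and let U₁ ∈ ℂ^{n₁×r₁}, U₂ ∈ ℂ^{(n₁n₂)×r₂} have orthonormal columns. Define X̃ entrywise by X̃_{i₁,i₂,i₃} = U₁(i₁,:) U₁* U₂((i₂−1)n₁+1:i₂n₁,:) U₂* X₂(:,i₃), where X₂ is the second unfolding of X. Then ‖X − X̃‖_F² ≤ ‖(I − U₁U₁*)X₁‖_F² + ‖(I − U₂U₂*)X₂‖_F², where X₁ is the first unfolding of X. -/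
open Matrix

/-- Pythagoras for orthogonal vectors in ℂ^n. -/
lemma sum_sq_add_of_orth {n : Type*} [Fintype n] (a b : n → ℂ)
    (h : star b ⬝ᵥ a = 0) :
    ∑ i, ‖a i + b i‖ ^ 2 = ∑ i, ‖a i‖ ^ 2 + ∑ i, ‖b i‖ ^ 2 := by
  have hsum : ∑ i, a i * (starRingEnd ℂ) (b i) = 0 := by
    rw [← h]; simp [dotProduct, mul_comm]
  have hre : ∑ i, (a i * (starRingEnd ℂ) (b i)).re = 0 := by
    rw [← Complex.re_sum, hsum]; simp
  simp only [Complex.sq_norm, Complex.normSq_add]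
  rw [Finset.sum_add_distrib, Finset.sum_add_distrib, ← Finset.mul_sum, hre]
  ring

/-- Key projection inequality. -/
lemma proj_bound {n r : ℕ} (U : Matrix (Fin n) (Fin r) ℂ) (hU : Uᴴ * U = 1)
    (v w : Fin n → ℂ) :
    ∑ i, ‖((1 - U * Uᴴ).mulVec v + (U * Uᴴ).mulVec w) i‖ ^ 2
      ≤ ∑ i, ‖((1 - U * Uᴴ).mulVec v) i‖ ^ 2 + ∑ i, ‖w i‖ ^ 2 := by
  set P := U * Uᴴ with hPdef
  have hPH : Pᴴ = P := by
    rw [hPdef, conjTranspose_mul, conjTranspose_conjTranspose]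
  have hPP : P * P = P := by
    rw [hPdef, Matrix.mul_assoc, ← Matrix.mul_assoc Uᴴ U Uᴴ, hU, Matrix.one_mul]
  -- orthogonality of (1-P)v and Pw
  have orth : ∀ (x y : Fin n → ℂ), star (P.mulVec y) ⬝ᵥ (1 - P).mulVec x = 0 := by
    intro x y
    rw [star_mulVec, hPH, dotProduct_mulVec, vecMul_vecMul]
    have : P * (1 - P) = 0 := by
      rw [Matrix.mul_sub, Matrix.mul_one, hPP, sub_self]
    rw [this]
    simp
  have h1 : ∑ i, ‖((1 - P).mulVec v + P.mulVec w) i‖ ^ 2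
      = ∑ i, ‖((1 - P).mulVec v) i‖ ^ 2 + ∑ i, ‖(P.mulVec w) i‖ ^ 2 := by
    have := sum_sq_add_of_orth ((1 - P).mulVec v) (P.mulVec w) (orth v w)
    simpa using this
  have hw : ∑ i, ‖w i‖ ^ 2
      = ∑ i, ‖((1 - P).mulVec w) i‖ ^ 2 + ∑ i, ‖(P.mulVec w) i‖ ^ 2 := by
    have he : ∀ i, ((1 - P).mulVec w) i + (P.mulVec w) i = w i := by
      intro i
      have : (1 - P).mulVec w + P.mulVec w = w := by
        rw [sub_mulVec, one_mulVec, sub_add_cancel]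
      exact congrFun this i
    have h2 := sum_sq_add_of_orth ((1 - P).mulVec w) (P.mulVec w) (orth w w)
    calc ∑ i, ‖w i‖ ^ 2 = ∑ i, ‖((1 - P).mulVec w) i + (P.mulVec w) i‖ ^ 2 :=
          (Finset.sum_congr rfl fun i _ => by rw [he i]).symm
      _ = _ := h2
  rw [h1, hw]
  have : (0:ℝ) ≤ ∑ i, ‖((1 - P).mulVec w) i‖ ^ 2 := by positivity
  linarith

set_option maxHeartbeats 1600000 in
/-- Projection error bound for the TT approximation built from orthonormal bases
U₁, U₂ of the column spaces of the unfoldings: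
‖X − X̃‖_F² ≤ ‖(I − U₁U₁ᴴ)X₁‖_F² + ‖(I − U₂U₂ᴴ)X₂‖_F². -/
theorem stmt4 {n₁ n₂ n₃ r₁ r₂ : ℕ}
    (X : Fin n₁ → Fin n₂ → Fin n₃ → ℂ)
    (X₁ : Matrix (Fin n₁) (Fin n₃ × Fin n₂) ℂ)
    (hX₁ : ∀ i p, X₁ i p = X i p.2 p.1)
    (X₂ : Matrix (Fin n₂ × Fin n₁) (Fin n₃) ℂ)
    (hX₂ : ∀ p k, X₂ p k = X p.2 p.1 k)
    (U₁ : Matrix (Fin n₁) (Fin r₁) ℂ) (hU₁on : U₁ᴴ * U₁ = 1)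
    (U₂ : Matrix (Fin n₂ × Fin n₁) (Fin r₂) ℂ) (hU₂on : U₂ᴴ * U₂ = 1)
    (Xt : Fin n₁ → Fin n₂ → Fin n₃ → ℂ)
    (hXt : ∀ i₁ i₂ i₃, Xt i₁ i₂ i₃ =
      (U₁ * U₁ᴴ * (Matrix.of fun (j : Fin n₁) (β : Fin r₂) => U₂ (i₂, j) β)
        * U₂ᴴ * X₂) i₁ i₃) :
    frobT (fun i j k => X i j k - Xt i j k) ^ 2
      ≤ frob ((1 - U₁ * U₁ᴴ) * X₁) ^ 2 + frob ((1 - U₂ * U₂ᴴ) * X₂) ^ 2 := by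
  obtain ⟨E₁, hE₁⟩ : ∃ E : Matrix (Fin n₁) (Fin n₃ × Fin n₂) ℂ,
      E = (1 - U₁ * U₁ᴴ) * X₁ := ⟨_, rfl⟩
  obtain ⟨E₂, hE₂⟩ : ∃ E : Matrix (Fin n₂ × Fin n₁) (Fin n₃) ℂ,
      E = (1 - U₂ * U₂ᴴ) * X₂ := ⟨_, rfl⟩
  obtain ⟨Q₂, hQ₂⟩ : ∃ Q : Matrix (Fin n₂ × Fin n₁) (Fin n₃) ℂ,
      Q = U₂ * U₂ᴴ * X₂ := ⟨_, rfl⟩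
  rw [← hE₁, ← hE₂, frobT, frob, frob, Real.sq_sqrt (by positivity),
    Real.sq_sqrt (by positivity), Real.sq_sqrt (by positivity)]
  -- entrywise facts
  have hE₂X : ∀ p k, E₂ p k = X₂ p k - Q₂ p k := by
    intro p k
    rw [hE₂, Matrix.sub_mul, Matrix.one_mul, Matrix.sub_apply, ← hQ₂]
  -- per-column inequality
  have key : ∀ (j : Fin n₂) (k : Fin n₃),
      ∑ i, ‖X i j k - Xt i j k‖ ^ 2
        ≤ (∑ i, ‖E₁ i (k, j)‖ ^ 2) + ∑ i, ‖E₂ (j, i) k‖ ^ 2 := by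
    intro j k
    have hv : ∀ i : Fin n₁, X i j k = (fun i => X i j k) i := fun _ => rfl
    -- the three vectors
    have hXty : ∀ i, Xt i j k =
        ((U₁ * U₁ᴴ).mulVec (fun l => Q₂ (j, l) k)) i := by
      intro i
      rw [hXt i j k, Matrix.mul_assoc, Matrix.mul_assoc, Matrix.mul_apply]
      simp only [mulVec, dotProduct]
      refine Finset.sum_congr rfl fun l _ => ?_
      congr 1
      rw [hQ₂, Matrix.mul_assoc, Matrix.mul_apply, Matrix.mul_apply]
      simp
    have hvec : ∀ i, X i j k - Xt i j k =
        ((1 - U₁ * U₁ᴴ).mulVec (fun l => X l j k)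
          + (U₁ * U₁ᴴ).mulVec (fun l => E₂ (j, l) k)) i := by
      intro i
      have h1 : (U₁ * U₁ᴴ).mulVec (fun l => E₂ (j, l) k)
          = (U₁ * U₁ᴴ).mulVec (fun l => X l j k)
            - (U₁ * U₁ᴴ).mulVec (fun l => Q₂ (j, l) k) := by
        have harg : (fun l => E₂ (j, l) k)
            = (fun l => X l j k) - (fun l => Q₂ (j, l) k) := by
          funext l
          rw [Pi.sub_apply, hE₂X (j, l) k, hX₂ (j, l) k]
        rw [harg, mulVec_sub]
      simp only [Pi.add_apply, h1, Pi.sub_apply, sub_mulVec, one_mulVec]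
      rw [hXty i]
      ring
    have hb := proj_bound U₁ hU₁on (fun l => X l j k) (fun l => E₂ (j, l) k)
    have e1 : ∀ i, E₁ i (k, j) = ((1 - U₁ * U₁ᴴ).mulVec (fun l => X l j k)) i := by
      intro i
      rw [hE₁, Matrix.mul_apply]
      simp only [mulVec, dotProduct]
      refine Finset.sum_congr rfl fun l _ => ?_
      rw [hX₁]
    calc ∑ i, ‖X i j k - Xt i j k‖ ^ 2
        = ∑ i, ‖((1 - U₁ * U₁ᴴ).mulVec (fun l => X l j k)
            + (U₁ * U₁ᴴ).mulVec (fun l => E₂ (j, l) k)) i‖ ^ 2 :=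
          Finset.sum_congr rfl fun i _ => by rw [hvec i]
      _ ≤ (∑ i, ‖((1 - U₁ * U₁ᴴ).mulVec (fun l => X l j k)) i‖ ^ 2)
            + ∑ i, ‖E₂ (j, i) k‖ ^ 2 := by exact hb
      _ = (∑ i, ‖E₁ i (k, j)‖ ^ 2) + ∑ i, ‖E₂ (j, i) k‖ ^ 2 := by
          congr 1
          exact Finset.sum_congr rfl fun i _ => by rw [e1 i]
  -- sum bookkeeping
  calc ∑ i, ∑ j, ∑ k, ‖X i j k - Xt i j k‖ ^ 2
      = ∑ j, ∑ i, ∑ k, ‖X i j k - Xt i j k‖ ^ 2 := Finset.sum_comm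
    _ = ∑ j, ∑ k, ∑ i, ‖X i j k - Xt i j k‖ ^ 2 :=
        Finset.sum_congr rfl fun _ _ => Finset.sum_comm
    _ ≤ ∑ j, ∑ k, ((∑ i, ‖E₁ i (k, j)‖ ^ 2) + ∑ i, ‖E₂ (j, i) k‖ ^ 2) :=
        Finset.sum_le_sum fun j _ => Finset.sum_le_sum fun k _ => key j k
    _ = (∑ j, ∑ k, ∑ i, ‖E₁ i (k, j)‖ ^ 2)
          + ∑ j, ∑ k, ∑ i, ‖E₂ (j, i) k‖ ^ 2 := by
        rw [← Finset.sum_add_distrib]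
        exact Finset.sum_congr rfl fun j _ => Finset.sum_add_distrib
    _ = (∑ i, ∑ p : Fin n₃ × Fin n₂, ‖E₁ i p‖ ^ 2)
          + ∑ p : Fin n₂ × Fin n₁, ∑ k, ‖E₂ p k‖ ^ 2 := by
        congr 1
        · calc ∑ j, ∑ k, ∑ i, ‖E₁ i (k, j)‖ ^ 2
              = ∑ k, ∑ j, ∑ i, ‖E₁ i (k, j)‖ ^ 2 := Finset.sum_comm
            _ = ∑ k, ∑ i, ∑ j, ‖E₁ i (k, j)‖ ^ 2 :=
                Finset.sum_congr rfl fun _ _ => Finset.sum_comm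
            _ = ∑ i, ∑ k, ∑ j, ‖E₁ i (k, j)‖ ^ 2 := Finset.sum_comm
            _ = ∑ i, ∑ p : Fin n₃ × Fin n₂, ‖E₁ i p‖ ^ 2 :=
                Finset.sum_congr rfl fun i _ =>
                  (Fintype.sum_prod_type (f := fun p => ‖E₁ i p‖ ^ 2)).symm
        · calc ∑ j, ∑ k, ∑ i, ‖E₂ (j, i) k‖ ^ 2
              = ∑ j, ∑ i, ∑ k, ‖E₂ (j, i) k‖ ^ 2 :=
                Finset.sum_congr rfl fun _ _ => Finset.sum_comm
            _ = ∑ p : Fin n₂ × Fin n₁, ∑ k, ‖E₂ p k‖ ^ 2 :=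
                (Fintype.sum_prod_type (f := fun p => ∑ k, ‖E₂ p k‖ ^ 2)).symm
end

section
/- Let X ∈ ℂ^{m×n}, let Q ∈ ℂ^{m×r} have orthonormal columns, and let Ψ ∈ ℂ^{m×ℓ} be such that Ψ*Q has a left inverse (Ψ*Q)† with (Ψ*Q)†(Ψ*Q) = I_r. Define Z = Q(Ψ*Q)†Ψ*X. Then ‖Z − X‖_F² = ‖(Ψ*Q)†Ψ*(I − QQ*)X‖_F² + ‖(I − QQ*)X‖_F². -/
open Matrix

lemma frob_sq_eq_trace {m n : Type*} [Fintype m] [Fintype n] (A : Matrix m n ℂ) :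
    frob A ^ 2 = (trace (Aᴴ * A)).re := by
  have h0 : (0:ℝ) ≤ ∑ i, ∑ j, ‖A i j‖ ^ 2 := by positivity
  rw [frob, Real.sq_sqrt h0, Matrix.trace]
  simp only [Matrix.diag, Matrix.mul_apply, Matrix.conjTranspose_apply, Complex.re_sum]
  rw [Finset.sum_comm]
  congr 1
  ext i
  congr 1
  ext j
  simp [Complex.star_def, ← Complex.normSq_eq_conj_mul_self, Complex.normSq_eq_norm_sq,
    ← Complex.ofReal_pow]

/-- Error identity for one-pass sketching: if Q has orthonormal columns and P
is a left inverse of ΨᴴQ, then for Z = Q P Ψᴴ X,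
‖Z − X‖_F² = ‖P Ψᴴ (I − QQᴴ)X‖_F² + ‖(I − QQᴴ)X‖_F². -/
theorem stmt8 {m n r ℓ : ℕ}
    (X : Matrix (Fin m) (Fin n) ℂ) (Q : Matrix (Fin m) (Fin r) ℂ)
    (Ψ : Matrix (Fin m) (Fin ℓ) ℂ) (P : Matrix (Fin r) (Fin ℓ) ℂ)
    (hQ : Qᴴ * Q = 1) (hP : P * (Ψᴴ * Q) = 1)
    (Z : Matrix (Fin m) (Fin n) ℂ) (hZ : Z = Q * P * Ψᴴ * X) :
    frob (Z - X) ^ 2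
      = frob (P * Ψᴴ * ((1 - Q * Qᴴ) * X)) ^ 2 + frob ((1 - Q * Qᴴ) * X) ^ 2 := by
  set B : Matrix (Fin m) (Fin n) ℂ := (1 - Q * Qᴴ) * X with hB
  set A : Matrix (Fin r) (Fin n) ℂ := P * Ψᴴ * B with hA
  have hQB : Qᴴ * B = 0 := by
    have h1 : Qᴴ * (1 - Q * Qᴴ) = 0 := by
      rw [Matrix.mul_sub, Matrix.mul_one, ← Matrix.mul_assoc, hQ, Matrix.one_mul, sub_self]
    rw [hB, ← Matrix.mul_assoc, h1, Matrix.zero_mul]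
  have hBQ : Bᴴ * Q = 0 := by
    have := congrArg conjTranspose hQB
    simpa [Matrix.conjTranspose_mul] using this
  have h1 : P * (Ψᴴ * (Q * (Qᴴ * X))) = Qᴴ * X := by
    rw [← Matrix.mul_assoc Ψᴴ, ← Matrix.mul_assoc P, hP, Matrix.one_mul]
  have hZX : Z - X = Q * A - B := by
    rw [hZ, hA, hB]
    simp only [Matrix.sub_mul, Matrix.one_mul, Matrix.mul_sub, Matrix.mul_assoc, h1]
    abel
  have hprod : (Q * A - B)ᴴ * (Q * A - B) = Aᴴ * A + Bᴴ * B := by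
    simp only [Matrix.conjTranspose_sub, Matrix.conjTranspose_mul, Matrix.sub_mul,
      Matrix.mul_sub, Matrix.mul_assoc]
    rw [show Qᴴ * (Q * A) = A from by rw [← Matrix.mul_assoc, hQ, Matrix.one_mul]]
    rw [hQB]
    rw [show Bᴴ * (Q * A) = 0 from by rw [← Matrix.mul_assoc, hBQ, Matrix.zero_mul]]
    simp
  rw [hZX, frob_sq_eq_trace, frob_sq_eq_trace, frob_sq_eq_trace, hprod, trace_add,
    Complex.add_re]
end
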